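/- arXiv:0704.3494 — 4 statements merged into one kernel-verified Lean document; each statement's English description precedes it below -/
import Mathlib

section
/- Let x, y ∈ Mₙ(ℂ), i ∈ ℂⁿ and j ∈ (ℂⁿ)^*. Assume that xy − yx + i⊗j = 0 and that y is nilpotent. Then there exists a complete flag 0 = V₀ ⊆ V₁ ⊆ ⋯ ⊆ Vₙ = ℂⁿ in ℂⁿ such that x V_k ⊆ V_k and y V_k ⊆ V_{k−1} for all k = 1, …, n. (This is the nil-flag description of the Lagrangian nil-cone 𝕄_nil(𝔸¹) = {(x,y,i,j) : [x,y] + i⊗j = 0, y nilpotent}, Lemma 4.6(i).) -/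
open Matrix

open Module

lemma aux_comap_finrank {V W : Type} [AddCommGroup V] [Module ℂ V] [FiniteDimensional ℂ V]
    [AddCommGroup W] [Module ℂ W] (f : V →ₗ[ℂ] W) (hf : Function.Surjective f)
    (p : Submodule ℂ W) :
    finrank ℂ (p.comap f) = finrank ℂ p + finrank ℂ (LinearMap.ker f) := by
  have hmem : ∀ u ∈ p.comap f, f u ∈ p := fun u hu => hu
  set g : ↥(p.comap f) →ₗ[ℂ] ↥p := f.restrict hmem with hg
  have hgsurj : Function.Surjective g := by
    rintro ⟨b, hb⟩
    obtain ⟨a, ha⟩ := hf b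
    refine ⟨⟨a, by simp [Submodule.mem_comap, ha, hb]⟩, ?_⟩
    apply Subtype.ext
    simp [hg, LinearMap.restrict_coe_apply, ha]
  have hrange : LinearMap.range g = ⊤ := LinearMap.range_eq_top.mpr hgsurj
  have hker : Submodule.map (p.comap f).subtype (LinearMap.ker g) = LinearMap.ker f := by
    ext z
    simp only [Submodule.mem_map, LinearMap.mem_ker]
    constructor
    · rintro ⟨⟨a, ha⟩, hk, rfl⟩
      have := congrArg Subtype.val hk
      simpa [hg, LinearMap.restrict_coe_apply] using this
    · intro hz
      have hzc : z ∈ p.comap f := by simp [Submodule.mem_comap, hz]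
      refine ⟨⟨z, hzc⟩, ?_, rfl⟩
      apply Subtype.ext
      simp [hg, LinearMap.restrict_coe_apply, hz]
  have h1 := LinearMap.finrank_range_add_finrank_ker g
  rw [hrange] at h1
  have h2 : finrank ℂ (LinearMap.ker g) = finrank ℂ (LinearMap.ker f) := by
    rw [← hker, Submodule.finrank_map_subtype_eq]
  rw [finrank_top] at h1
  omega

lemma aux_eigen : ∀ (n : ℕ) (V : Type) [AddCommGroup V] [Module ℂ V] [FiniteDimensional ℂ V]
    [Nontrivial V], finrank ℂ V ≤ n → ∀ (x y : V →ₗ[ℂ] V) (i : V) (j : V →ₗ[ℂ] ℂ),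
    (∀ v, x (y v) - y (x v) + j v • i = 0) → IsNilpotent y →
    ∃ v : V, v ≠ 0 ∧ y v = 0 ∧ (∃ c : ℂ, x v = c • v) ∧
      (j v = 0 ∨ i ∈ Submodule.span ℂ {v}) := by
  intro n
  induction n with
  | zero =>
    intro V _ _ _ _ hn
    have : 0 < finrank ℂ V := finrank_pos
    omega
  | succ n IH =>
    intro V _ _ _ _ hn x y i j hrel hnil
    obtain ⟨N, hN⟩ := hnil
    -- ker y ≠ ⊥
    have hker : LinearMap.ker y ≠ ⊥ := by
      intro h
      have hinj : Function.Injective y := LinearMap.ker_eq_bot.mp h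
      have hinjN : ∀ m, Function.Injective (⇑(y ^ m)) := by
        intro m
        induction m with
        | zero => intro a b hab; simpa using hab
        | succ m ihm =>
          rw [pow_succ, Module.End.mul_eq_comp, LinearMap.coe_comp]
          exact Function.Injective.comp ihm hinj
      obtain ⟨v, w, hvw⟩ := exists_pair_ne V
      apply hvw
      apply hinjN N
      simp [hN]
    by_cases hcase : i = 0 ∨ ∀ w ∈ LinearMap.ker y, j w = 0
    · -- x preserves ker y
      have hxker : ∀ w ∈ LinearMap.ker y, x w ∈ LinearMap.ker y := by
        intro w hw
        have h0 := hrel w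
        rw [LinearMap.mem_ker.mp hw, map_zero] at h0
        have : y (x w) = j w • i := by
          rw [zero_sub, neg_add_eq_sub, sub_eq_zero] at h0
          exact h0.symm
        rcases hcase with hi0 | hj0
        · simp [LinearMap.mem_ker, this, hi0]
        · simp [LinearMap.mem_ker, this, hj0 w hw]
      have hnt : Nontrivial ↥(LinearMap.ker y) := Submodule.nontrivial_iff_ne_bot.mpr hker
      set x' : Module.End ℂ ↥(LinearMap.ker y) := x.restrict hxker with hx'
      obtain ⟨c, hc⟩ := Module.End.exists_eigenvalue x'
      obtain ⟨w, hw⟩ := hc.exists_hasEigenvector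
      refine ⟨w.1, by simpa using hw.right, LinearMap.mem_ker.mp w.2, ⟨c, ?_⟩, ?_⟩
      · have := congrArg Subtype.val hw.apply_eq_smul
        simpa [hx', LinearMap.restrict_coe_apply] using this
      · rcases hcase with hi0 | hj0
        · exact Or.inr (by simp [hi0])
        · exact Or.inl (hj0 w.1 w.2)
    · push_neg at hcase
      obtain ⟨hi0, w, hw, hjw⟩ := hcase
      -- i ∈ range y
      have hyxw : y (x w) = j w • i := by
        have h0 := hrel w
        rw [LinearMap.mem_ker.mp hw, map_zero, zero_sub, neg_add_eq_sub, sub_eq_zero] at h0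
        exact h0.symm
      have hiS : i ∈ LinearMap.range y := by
        refine ⟨(j w)⁻¹ • x w, ?_⟩
        rw [_root_.map_smul, hyxw, smul_smul, inv_mul_cancel₀ hjw, one_smul]
      set S := LinearMap.range y with hS
      have hxS : ∀ u ∈ S, x u ∈ S := by
        rintro u ⟨t, rfl⟩
        have h0 := hrel t
        have : x (y t) = y (x t) - j t • i := by
          rw [sub_add_eq_add_sub, sub_eq_zero] at h0
          exact eq_sub_of_add_eq h0
        rw [this]
        exact sub_mem (LinearMap.mem_range_self y (x t)) (Submodule.smul_mem S _ hiS)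
      have hyS : ∀ u ∈ S, y u ∈ S := fun u _ => LinearMap.mem_range_self y u
      -- S is proper
      have hSne : S ≠ ⊤ := by
        intro hStop
        have hsurj : Function.Surjective y := LinearMap.range_eq_top.mp hStop
        have hsurjN : ∀ m, Function.Surjective (⇑(y ^ m)) := by
          intro m
          induction m with
          | zero => intro a; exact ⟨a, by simp⟩
          | succ m ihm =>
            rw [pow_succ, Module.End.mul_eq_comp, LinearMap.coe_comp]
            exact Function.Surjective.comp ihm hsurj
        obtain ⟨u, hu⟩ := hsurjN N i
        rw [hN] at hu
        exact hi0 (by simpa using hu.symm)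
      have hfr : finrank ℂ S ≤ n := by
        have := Submodule.finrank_lt hSne
        omega
      have hnt : Nontrivial ↥S := nontrivial_of_ne ⟨i, hiS⟩ 0 (by simp [hi0])
      set x' := x.restrict hxS with hx'
      set y' := y.restrict hyS with hy'
      have hnil' : IsNilpotent y' := by
        refine ⟨N, ?_⟩
        have : y' ^ N = (y ^ N).restrict (by intro u hu; rw [hN]; simp) :=
          Module.End.pow_restrict N hyS
        ext u
        have := congrArg Subtype.val (congrFun (congrArg DFunLike.coe this) u)
        simp only [LinearMap.restrict_coe_apply, hN] at this
        simpa using this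
      have hrel' : ∀ v : ↥S, x' (y' v) - y' (x' v) + (j.comp S.subtype) v • (⟨i, hiS⟩ : ↥S) = 0 := by
        intro v
        apply Subtype.ext
        have := hrel v.1
        simpa [hx', hy', LinearMap.restrict_coe_apply] using this
      obtain ⟨v', hv0, hyv, ⟨c, hxv⟩, hlast⟩ :=
        IH ↥S hfr x' y' ⟨i, hiS⟩ (j.comp S.subtype) hrel' hnil'
      refine ⟨v'.1, by simpa using hv0, ?_, ⟨c, ?_⟩, ?_⟩
      · have := congrArg Subtype.val hyv
        simpa [hy', LinearMap.restrict_coe_apply] using this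
      · have := congrArg Subtype.val hxv
        simpa [hx', LinearMap.restrict_coe_apply] using this
      · rcases hlast with hj0 | hspan
        · exact Or.inl (by simpa using hj0)
        · right
          obtain ⟨a, ha⟩ := Submodule.mem_span_singleton.mp hspan
          have := congrArg Subtype.val ha
          exact Submodule.mem_span_singleton.mpr ⟨a, by simpa using this⟩

lemma aux_flag : ∀ (n : ℕ) (V : Type) [AddCommGroup V] [Module ℂ V] [FiniteDimensional ℂ V],
    finrank ℂ V = n → ∀ (x y : V →ₗ[ℂ] V) (i : V) (j : V →ₗ[ℂ] ℂ),
    (∀ v, x (y v) - y (x v) + j v • i = 0) → IsNilpotent y →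
    ∃ W : ℕ → Submodule ℂ V, W 0 = ⊥ ∧ W n = ⊤ ∧ (∀ k, k < n → W k ≤ W (k + 1)) ∧
      (∀ k, k ≤ n → finrank ℂ (W k) = k) ∧
      (∀ k, 1 ≤ k → k ≤ n → (∀ u ∈ W k, x u ∈ W k) ∧ (∀ u ∈ W k, y u ∈ W (k - 1))) := by
  intro n
  induction n with
  | zero =>
    intro V _ _ _ hn x y i j hrel hnil
    have hsing : Subsingleton V := finrank_zero_iff.mp hn
    refine ⟨fun _ => ⊥, rfl, Subsingleton.elim _ _, fun k _ => le_rfl, ?_, ?_⟩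
    · intro k hk
      obtain rfl := Nat.le_zero.mp hk
      simp
    · intro k hk1 hk2
      omega
  | succ n IH =>
    intro V _ _ _ hn x y i j hrel hnil
    have hnt : Nontrivial V := by
      have h : 0 < finrank ℂ V := by omega
      exact (Module.finrank_pos_iff (R := ℂ)).mp h
    obtain ⟨v, hv0, hyv, ⟨c, hxv⟩, hcond⟩ :=
      aux_eigen (finrank ℂ V) V le_rfl x y i j hrel hnil
    set L : Submodule ℂ V := Submodule.span ℂ {v} with hL
    have hvL : v ∈ L := Submodule.mem_span_singleton_self v
    have hxL : L ≤ L.comap x := by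
      rw [hL, Submodule.span_le, Set.singleton_subset_iff]
      show x v ∈ L
      rw [hxv]
      exact Submodule.smul_mem _ c hvL
    have hyL : L ≤ L.comap y := by
      rw [hL, Submodule.span_le, Set.singleton_subset_iff]
      show y v ∈ L
      rw [hyv]
      exact Submodule.zero_mem L
    set π := L.mkQ with hπ
    have hπsurj : Function.Surjective π := Submodule.mkQ_surjective L
    set xq := L.mapQ L x hxL with hxq
    set yq := L.mapQ L y hyL with hyq
    have hxcomm : ∀ u : V, xq (π u) = π (x u) := by
      intro u
      simp only [hπ, hxq, Submodule.mkQ_apply, Submodule.mapQ_apply]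
    have hycomm : ∀ u : V, yq (π u) = π (y u) := by
      intro u
      simp only [hπ, hyq, Submodule.mkQ_apply, Submodule.mapQ_apply]
    have hzero : ∀ u : V, u ∈ L → π u = 0 := by
      intro u hu
      simp only [hπ, Submodule.mkQ_apply]
      exact (Submodule.Quotient.mk_eq_zero L).mpr hu
    have hzero' : ∀ u : V, π u = 0 → u ∈ L := by
      intro u hu
      simp only [hπ, Submodule.mkQ_apply] at hu
      exact (Submodule.Quotient.mk_eq_zero L).mp hu
    -- powers of yq
    have hpow : ∀ (k : ℕ) (u : V), (yq ^ k) (π u) = π ((y ^ k) u) := by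
      intro k
      induction k with
      | zero => intro u; simp
      | succ m ihm =>
        intro u
        rw [pow_succ', pow_succ', Module.End.mul_apply, Module.End.mul_apply, ihm, hycomm]
    have hnilq : IsNilpotent yq := by
      obtain ⟨N, hN⟩ := hnil
      refine ⟨N, LinearMap.ext fun q => ?_⟩
      obtain ⟨u, rfl⟩ := hπsurj q
      rw [LinearMap.zero_apply, hpow N u, hN, LinearMap.zero_apply, map_zero]
    -- quotient data i', j'
    have hdata : ∃ (iq : V ⧸ L) (jq : (V ⧸ L) →ₗ[ℂ] ℂ),
        ∀ q, xq (yq q) - yq (xq q) + jq q • iq = 0 := by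
      rcases hcond with hj0 | hiL
      · have hLker : L ≤ LinearMap.ker j := by
          rw [hL, Submodule.span_le, Set.singleton_subset_iff]
          show j v = 0
          exact hj0
        refine ⟨π i, L.liftQ j hLker, ?_⟩
        intro q
        obtain ⟨u, rfl⟩ := hπsurj q
        have hjq : (L.liftQ j hLker) (π u) = j u := by
          simp only [hπ, Submodule.mkQ_apply, Submodule.liftQ_apply]
        rw [hycomm, hxcomm, hxcomm, hycomm, hjq, ← _root_.map_smul, ← map_sub, ← map_add, hrel u,
          map_zero]
      · refine ⟨0, 0, ?_⟩
        intro q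
        obtain ⟨u, rfl⟩ := hπsurj q
        rw [hycomm, hxcomm, hxcomm, hycomm]
        simp only [LinearMap.zero_apply, zero_smul, add_zero, ← map_sub]
        have h0 := hrel u
        have hmem : x (y u) - y (x u) ∈ L := by
          have : x (y u) - y (x u) = -(j u • i) := by
            rw [← sub_eq_zero, sub_neg_eq_add]
            exact h0
          rw [this]
          exact neg_mem (Submodule.smul_mem L _ hiL)
        exact hzero _ hmem
    obtain ⟨iq, jq, hrelq⟩ := hdata
    -- finrank of quotient
    have hfrL : finrank ℂ L = 1 := finrank_span_singleton hv0
    have hfrQ : finrank ℂ (V ⧸ L) = n := by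
      have := Submodule.finrank_quotient_add_finrank L
      omega
    obtain ⟨Wq, hW0, hWtop, hWmono, hWrank, hWxy⟩ :=
      IH (V ⧸ L) hfrQ xq yq iq jq hrelq hnilq
    -- build flag
    refine ⟨fun k => match k with
      | 0 => ⊥
      | (m + 1) => (Wq m).comap π, rfl, ?_, ?_, ?_, ?_⟩
    · show (Wq n).comap π = ⊤
      rw [hWtop, Submodule.comap_top]
    · intro k hk
      match k with
      | 0 => exact bot_le
      | (m + 1) =>
        exact Submodule.comap_mono (hWmono m (by omega))
    · intro k hk
      match k with
      | 0 => simp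
      | (m + 1) =>
        show finrank ℂ ((Wq m).comap π) = m + 1
        rw [aux_comap_finrank π hπsurj (Wq m), hWrank m (by omega)]
        have hkerπ : LinearMap.ker π = L := by
          rw [hπ, Submodule.ker_mkQ]
        rw [hkerπ, hfrL]
    · intro k hk1 hk2
      match k with
      | (m + 1) =>
        constructor
        · intro u hu
          show x u ∈ (Wq m).comap π
          have hu' : π u ∈ Wq m := hu
          simp only [Submodule.mem_comap]
          rw [← hxcomm]
          match m with
          | 0 =>
            rw [hW0] at hu' ⊢
            simp only [Submodule.mem_bot] at hu' ⊢
            have huL : u ∈ L := hzero' u hu'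
            have hxuL : x u ∈ L := hxL huL
            rw [hxcomm]
            exact hzero _ hxuL
          | (m' + 1) =>
            exact (hWxy (m' + 1) (by omega) (by omega)).1 (π u) hu'
        · intro u hu
          have hu' : π u ∈ Wq m := hu
          match m with
          | 0 =>
            show y u ∈ (⊥ : Submodule ℂ V)
            rw [hW0] at hu'
            simp only [Submodule.mem_bot] at hu'
            have huL : u ∈ L := hzero' u hu'
            rw [hL] at huL
            obtain ⟨a, ha⟩ := Submodule.mem_span_singleton.mp huL
            rw [← ha, _root_.map_smul, hyv, smul_zero]
            simp
          | (m' + 1) =>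
            show y u ∈ (Wq m').comap π
            simp only [Submodule.mem_comap]
            rw [← hycomm u]
            have := (hWxy (m' + 1) (by omega) (by omega)).2 (π u) hu'
            simpa using this

/- STATEMENT 6: If xy − yx + i⊗j = 0 with y nilpotent, then there is a complete flag
0 = V₀ ⊆ V₁ ⊆ ⋯ ⊆ Vₙ = ℂⁿ with x V_k ⊆ V_k and y V_k ⊆ V_{k−1} for k = 1,…,n
(the nil-flag description of 𝕄_nil(𝔸¹)). -/

theorem nil_flag_exists_additive (n : ℕ) (x y : Matrix (Fin n) (Fin n) ℂ)
    (i : Fin n → ℂ) (j : Module.Dual ℂ (Fin n → ℂ))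
    (hmom : x * y - y * x + Matrix.vecMulVec i (fun b => j (Pi.single b 1)) = 0)
    (hnil : IsNilpotent y) :
    ∃ V : ℕ → Submodule ℂ (Fin n → ℂ),
      V 0 = ⊥ ∧ V n = ⊤ ∧
      (∀ k, k < n → V k ≤ V (k + 1)) ∧
      (∀ k, k ≤ n → Module.finrank ℂ (V k) = k) ∧
      (∀ k, 1 ≤ k → k ≤ n →
        (∀ u ∈ V k, x.mulVec u ∈ V k) ∧ (∀ u ∈ V k, y.mulVec u ∈ V (k - 1))) := by
  classical
  set X := Matrix.toLin' x with hX
  set Y := Matrix.toLin' y with hY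
  have hg : ∀ v : Fin n → ℂ, j v = (fun b => j (Pi.single b 1)) ⬝ᵥ v := by
    intro v
    have hv : v = ∑ b, v b • (Pi.single b 1 : Fin n → ℂ) := by
      funext c
      rw [Finset.sum_apply]
      simp only [Pi.smul_apply, Pi.single_apply, smul_eq_mul, mul_ite, mul_one, mul_zero]
      rw [Finset.sum_ite_eq Finset.univ c v]
      simp
    conv_lhs => rw [hv]
    rw [map_sum]
    simp only [_root_.map_smul, smul_eq_mul, dotProduct]
    exact Finset.sum_congr rfl fun b _ => mul_comm _ _
  have hrel : ∀ v, X (Y v) - Y (X v) + j v • i = 0 := by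
    intro v
    have h0 := congrArg (fun M => M.mulVec v) hmom
    simp only [Matrix.add_mulVec, Matrix.sub_mulVec, Matrix.zero_mulVec] at h0
    rw [← Matrix.mulVec_mulVec, ← Matrix.mulVec_mulVec] at h0
    have hvmv : (Matrix.vecMulVec i (fun b => j (Pi.single b 1))).mulVec v
        = ((fun b => j (Pi.single b 1)) ⬝ᵥ v) • i := by
      funext b'
      simp [Matrix.mulVec, Matrix.vecMulVec_apply, dotProduct, Finset.mul_sum,
        mul_assoc, Pi.smul_apply, smul_eq_mul, mul_comm, mul_left_comm]
    rw [hvmv] at h0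
    rw [hg v]
    simpa [hX, hY, Matrix.toLin'_apply] using h0
  have hnil' : IsNilpotent Y := by
    obtain ⟨N, hN⟩ := hnil
    have hp : ∀ m : ℕ, Y ^ m = Matrix.toLin' (y ^ m) := by
      intro m
      induction m with
      | zero => simp [pow_zero, Matrix.toLin'_one, Module.End.one_eq_id]
      | succ m ihm =>
        rw [pow_succ, pow_succ, ihm, Matrix.toLin'_mul, hY, Module.End.mul_eq_comp]
    exact ⟨N, by rw [hp N, hN, map_zero]⟩
  obtain ⟨W, h0, htop, hmono, hrank, hxy⟩ :=
    aux_flag n (Fin n → ℂ) (Module.finrank_fin_fun ℂ) X Y i j hrel hnil'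
  refine ⟨W, h0, htop, hmono, hrank, fun k hk1 hk2 => ⟨?_, ?_⟩⟩
  · intro u hu
    have := (hxy k hk1 hk2).1 u hu
    simpa [hX, Matrix.toLin'_apply] using this
  · intro u hu
    have := (hxy k hk1 hk2).2 u hu
    simpa [hY, Matrix.toLin'_apply] using this
end

section
/- Let x ∈ GLₙ(ℂ), y ∈ Mₙ(ℂ), i ∈ ℂⁿ and j ∈ (ℂⁿ)^*. Assume that x y x⁻¹ − y + i⊗j = 0 and that y is nilpotent. Then there exists a complete flag 0 = V₀ ⊆ V₁ ⊆ ⋯ ⊆ Vₙ = ℂⁿ in ℂⁿ such that x V_k = V_k and y V_k ⊆ V_{k−1} for all k = 1, …, n. (This is the nil-flag description of the Lagrangian nil-cone 𝕄_nil(ℂ^×) in the trigonometric case, Lemma 4.6(ii).) -/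
open Matrix

/- STATEMENT 7: If x ∈ GLₙ(ℂ), y ∈ Mₙ(ℂ) nilpotent and x y x⁻¹ − y + i⊗j = 0, then there
is a complete flag 0 = V₀ ⊆ ⋯ ⊆ Vₙ = ℂⁿ with x V_k = V_k and y V_k ⊆ V_{k−1} for
k = 1,…,n (the nil-flag description of 𝕄_nil(ℂ^×)). -/

section AuxNilFlag


open Module LinearMap

universe u




lemma aux_pow_mem {V : Type u} [AddCommGroup V] [Module ℂ V] (g : V →ₗ[ℂ] V)
    (S : Submodule ℂ V) (hS : S.map g ≤ S) : ∀ (m : ℕ) (v : V), v ∈ S → (g ^ m) v ∈ S := by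
  intro m
  induction m with
  | zero => intro v hv; simpa using hv
  | succ m ih =>
    intro v hv
    rw [pow_succ']
    exact hS ⟨_, ih v hv, rfl⟩

lemma exists_eigen {V : Type u} [AddCommGroup V] [Module ℂ V] [FiniteDimensional ℂ V]
    [Nontrivial V] (f g : V →ₗ[ℂ] V) (hg : IsNilpotent g)
    (i : V) (j : V →ₗ[ℂ] ℂ) (hC : ∀ v, f (g v) - g (f v) = j v • i) :
    ∃ v : V, v ≠ 0 ∧ g v = 0 ∧ ∃ c : ℂ, f v = c • v := by
  classical
  obtain ⟨N, hN⟩ := hg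
  -- the collection of nonzero invariant submodules
  set 𝒮 : Set (Submodule ℂ V) := {S | S ≠ ⊥ ∧ S.map f ≤ S ∧ S.map g ≤ S} with h𝒮
  have htop : (⊤ : Submodule ℂ V) ∈ 𝒮 := ⟨bot_ne_top.symm, le_top, le_top⟩
  have hex : ∃ m : ℕ, ∃ S ∈ 𝒮, finrank ℂ S = m := ⟨_, ⊤, htop, rfl⟩
  obtain ⟨S, hS𝒮, hSrank⟩ := Nat.find_spec hex
  obtain ⟨hSne, hSf, hSg⟩ := hS𝒮
  have hmin : ∀ T ∈ 𝒮, Nat.find hex ≤ finrank ℂ T := by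
    intro T hT
    by_contra h
    exact Nat.find_min hex (by omega) ⟨T, hT, rfl⟩
  -- first claim : S ≤ ker g
  have hker : S ≤ LinearMap.ker g := by
    by_contra h
    obtain ⟨w, hwS, hgw⟩ := SetLike.not_le_iff_exists.mp h
    rw [LinearMap.mem_ker] at hgw
    have hw0 : w ≠ 0 := fun h0 => hgw (by simp [h0])
    -- there is a nonzero kernel element in S
    have hexk : ∃ t : ℕ, (g ^ t) w = 0 := ⟨N, by simp [hN]⟩
    have ht1 : 1 ≤ Nat.find hexk := by
      rcases Nat.eq_zero_or_pos (Nat.find hexk) with h0 | h1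
      · exact absurd (Nat.find_spec hexk) (by rw [h0]; simpa using hw0)
      · exact h1
    set t := Nat.find hexk with htdef
    set v0 : V := (g ^ (t - 1)) w with hv0def
    have hv0S : v0 ∈ S := aux_pow_mem g S hSg _ w hwS
    have hv0ne : v0 ≠ 0 := Nat.find_min hexk (by omega)
    have hgv0 : g v0 = 0 := by
      have : (g ^ t) w = 0 := Nat.find_spec hexk
      rw [hv0def, ← Module.End.mul_apply, ← pow_succ']
      rwa [show t - 1 + 1 = t by omega]
    by_cases hj : ∀ u ∈ S ⊓ LinearMap.ker g, j u = 0
    · -- K = S ⊓ ker g is invariant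
      set K := S ⊓ LinearMap.ker g with hKdef
      have hK𝒮 : K ∈ 𝒮 := by
        refine ⟨?_, ?_, ?_⟩
        · exact fun h0 => hv0ne (by
            have : v0 ∈ K := ⟨hv0S, LinearMap.mem_ker.mpr hgv0⟩
            rw [h0] at this; simpa using this)
        · rintro _ ⟨u, huK, rfl⟩
          refine ⟨hSf ⟨u, huK.1, rfl⟩, LinearMap.mem_ker.mpr ?_⟩
          have := hC u
          rw [LinearMap.mem_ker.mp huK.2, hj u huK] at this
          simp only [map_zero, zero_smul, zero_sub] at this
          simpa using this.symm
        · rintro _ ⟨u, huK, rfl⟩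
          rw [LinearMap.mem_ker.mp huK.2]
          exact K.zero_mem
      have hKS : K = S := by
        refine Submodule.eq_of_le_of_finrank_le inf_le_left ?_
        rw [hSrank]; exact hmin K hK𝒮
      rw [← hKS] at hwS
      exact hgw (LinearMap.mem_ker.mp hwS.2)
    · push_neg at hj
      obtain ⟨u0, hu0, hju0⟩ := hj
      have hi : i ∈ S.map g := by
        have := hC u0
        rw [LinearMap.mem_ker.mp hu0.2] at this
        simp only [map_zero, zero_sub] at this
        have : i = (j u0)⁻¹ • (-(g (f u0))) := by
          rw [this, smul_smul, inv_mul_cancel₀ hju0, one_smul]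
        rw [this]
        refine Submodule.smul_mem _ _ (Submodule.neg_mem _ ?_)
        exact ⟨f u0, hSf ⟨u0, hu0.1, rfl⟩, rfl⟩
      set R := S.map g with hRdef
      have hR𝒮 : R ∈ 𝒮 := by
        refine ⟨?_, ?_, ?_⟩
        · intro h0
          exact hgw (by
            have : g w ∈ R := ⟨w, hwS, rfl⟩
            rw [h0] at this; simpa using this)
        · rintro _ ⟨_, ⟨u, huS, rfl⟩, rfl⟩
          have hfgu : f (g u) = j u • i + g (f u) := by
            have := hC u; rw [sub_eq_iff_eq_add] at this; exact this
          rw [hfgu]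
          exact R.add_mem (R.smul_mem _ hi) ⟨f u, hSf ⟨u, huS, rfl⟩, rfl⟩
        · exact Submodule.map_mono hSg
      have hRS : R = S := by
        refine Submodule.eq_of_le_of_finrank_le hSg ?_
        rw [hSrank]; exact hmin R hR𝒮
      -- iterate : map (g^m) S = S for all m, contradiction with nilpotency
      have hiter : ∀ m : ℕ, S.map (g ^ m) = S := by
        intro m
        induction m with
        | zero => simp [Module.End.one_eq_id]
        | succ m ih =>
          rw [pow_succ, Module.End.mul_eq_comp, Submodule.map_comp,
            show Submodule.map g S = S from hRS, ih]
      have := hiter N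
      rw [hN] at this
      simp only [Submodule.map_zero] at this
      exact hSne this.symm
  -- now restrict f to S and find an eigenvector
  have hfS : ∀ v ∈ S, f v ∈ S := fun v hv => hSf ⟨v, hv, rfl⟩
  set f' : S →ₗ[ℂ] S := f.restrict hfS with hf'def
  haveI : Nontrivial S := Submodule.nontrivial_iff_ne_bot.mpr hSne
  obtain ⟨c, hc⟩ := Module.End.exists_eigenvalue f'
  obtain ⟨v, hv⟩ := hc.exists_hasEigenvector
  refine ⟨(v : V), fun h0 => hv.2 (Subtype.coe_injective (by simpa using h0)), hker v.2, c, ?_⟩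
  have := hv.apply_eq_smul
  have : ((f' v : S) : V) = ((c • v : S) : V) := by rw [this]
  simpa [hf'def, LinearMap.restrict_apply] using this



lemma finrank_comap_mkQ {V : Type u} [AddCommGroup V] [Module ℂ V] [FiniteDimensional ℂ V]
    (L : Submodule ℂ V) (W : Submodule ℂ (V ⧸ L)) :
    finrank ℂ (W.comap L.mkQ) = finrank ℂ W + finrank ℂ L := by
  set P := W.comap L.mkQ with hP
  set φ : P →ₗ[ℂ] (V ⧸ L) := L.mkQ.comp P.subtype with hφ
  have hrange : LinearMap.range φ = W := by
    rw [hφ, LinearMap.range_comp, Submodule.range_subtype, hP,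
      Submodule.map_comap_eq, Submodule.range_mkQ, top_inf_eq]
  have hker : LinearMap.ker φ = L.comap P.subtype := by
    rw [hφ, LinearMap.ker_comp, Submodule.ker_mkQ]
  have hL : L ≤ P := by
    intro v hv
    simp [hP, Submodule.mem_comap, (Submodule.Quotient.mk_eq_zero L).mpr hv]
  have h1 := LinearMap.finrank_range_add_finrank_ker φ
  rw [hrange, hker] at h1
  rw [← h1, LinearEquiv.finrank_eq (Submodule.comapSubtypeEquivOfLe hL)]

lemma flag_aux : ∀ (n : ℕ) (V : Type u) [AddCommGroup V] [Module ℂ V] [FiniteDimensional ℂ V],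
    finrank ℂ V = n → ∀ (f g : V →ₗ[ℂ] V), Function.Surjective f → IsNilpotent g →
    (∃ (i : V) (j : V →ₗ[ℂ] ℂ), ∀ v, f (g v) - g (f v) = j v • i) →
    ∃ W : ℕ → Submodule ℂ V, W 0 = ⊥ ∧ W n = ⊤ ∧ (∀ k < n, W k ≤ W (k + 1)) ∧
      (∀ k ≤ n, finrank ℂ (W k) = k) ∧
      (∀ k, 1 ≤ k → k ≤ n → (W k).map f = W k ∧ ∀ u ∈ W k, g u ∈ W (k - 1)) := by
  intro n
  induction n with
  | zero =>
    intro V _ _ _ hV f g hf hg hC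
    haveI : Subsingleton V := Module.finrank_zero_iff.mp hV
    refine ⟨fun _ => ⊥, rfl, Subsingleton.elim _ _, by omega, ?_, by omega⟩
    intro k hk
    interval_cases k
    simp
  | succ n IH =>
    intro V _ _ _ hV f g hf hg hC
    haveI : Nontrivial V := Module.finrank_pos_iff.mp (by rw [hV]; exact n.succ_pos)
    obtain ⟨i, j, hC⟩ := hC
    obtain ⟨v, hv0, hgv, c, hfv⟩ := exists_eigen f g hg i j hC
    set L : Submodule ℂ V := ℂ ∙ v with hLdef
    have hvL : v ∈ L := Submodule.mem_span_singleton_self v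
    have hfL : L ≤ L.comap f := by
      rw [hLdef, Submodule.span_le]
      intro u hu
      rw [Set.mem_singleton_iff] at hu
      subst hu
      exact Submodule.mem_comap.mpr (by rw [hfv]; exact L.smul_mem c hvL)
    have hgL : L ≤ L.comap g := by
      rw [hLdef, Submodule.span_le]
      intro u hu
      rw [Set.mem_singleton_iff] at hu
      subst hu
      exact Submodule.mem_comap.mpr (by rw [hgv]; exact L.zero_mem)
    have hL1 : finrank ℂ L = 1 := finrank_span_singleton hv0
    set π := L.mkQ with hπ
    set f' := L.mapQ L f hfL with hf'
    set g' := L.mapQ L g hgL with hg'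
    have hπf : ∀ w : V, f' (π w) = π (f w) := fun w => Submodule.mapQ_apply L L f w
    have hπg : ∀ w : V, g' (π w) = π (g w) := fun w => Submodule.mapQ_apply L L g w
    have hf'surj : Function.Surjective f' := by
      intro q
      obtain ⟨w, rfl⟩ := L.mkQ_surjective q
      obtain ⟨u, rfl⟩ := hf w
      exact ⟨π u, hπf u⟩
    have hπgpow : ∀ (m : ℕ) (w : V), (g' ^ m) (π w) = π ((g ^ m) w) := by
      intro m
      induction m with
      | zero => simp
      | succ m ih =>
        intro w
        rw [pow_succ, Module.End.mul_apply, hπg w, ih (g w), ← Module.End.mul_apply, ← pow_succ]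
    have hg'nil : IsNilpotent g' := by
      obtain ⟨N, hN⟩ := hg
      refine ⟨N, ?_⟩
      apply LinearMap.ext
      intro q
      obtain ⟨w, rfl⟩ := L.mkQ_surjective q
      rw [LinearMap.zero_apply, hπgpow, hN]
      simp
    have hC' : ∃ (i' : V ⧸ L) (j' : (V ⧸ L) →ₗ[ℂ] ℂ),
        ∀ q, f' (g' q) - g' (f' q) = j' q • i' := by
      have h0 : j v • i = 0 := by
        have h := hC v
        rw [hgv, hfv, map_zero, _root_.map_smul, hgv, smul_zero, sub_zero] at h
        exact h.symm
      rcases smul_eq_zero.mp h0 with hjv | hi0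
      · -- j vanishes on L, descend j
        have hLj : L ≤ LinearMap.ker j := by
          rw [hLdef, Submodule.span_le]
          intro u hu
          rw [Set.mem_singleton_iff] at hu
          subst hu
          exact LinearMap.mem_ker.mpr hjv
        refine ⟨π i, L.liftQ j hLj, fun q => ?_⟩
        obtain ⟨w, rfl⟩ := L.mkQ_surjective q
        rw [hπg, hπf, hπf, hπg, ← map_sub, hC w]
        simp [_root_.map_smul]
      · refine ⟨0, 0, fun q => ?_⟩
        obtain ⟨w, rfl⟩ := L.mkQ_surjective q
        rw [hπg, hπf, hπf, hπg, ← map_sub, hC w, hi0]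
        simp
    have hQrank : finrank ℂ (V ⧸ L) = n := by
      have := Submodule.finrank_quotient_add_finrank L
      omega
    obtain ⟨W, hW0, hWtop, hWmono, hWrank, hWmaps⟩ := IH (V ⧸ L) hQrank f' g' hf'surj hg'nil hC'
    have hWf : ∀ t ≤ n, (W t).map f' ≤ W t := by
      intro t ht
      rcases Nat.eq_zero_or_pos t with rfl | ht1
      · rw [hW0]; simp
      · exact le_of_eq (hWmaps t ht1 ht).1
    have finj : Function.Injective f := (LinearMap.injective_iff_surjective).mpr hf
    set e : V ≃ₗ[ℂ] V := LinearEquiv.ofBijective f ⟨finj, hf⟩ with he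
    refine ⟨fun k => if k = 0 then ⊥ else (W (k - 1)).comap π, if_pos rfl, ?_, ?_, ?_, ?_⟩
    · beta_reduce
      rw [if_neg (by omega)]
      rw [show n + 1 - 1 = n from rfl, hWtop, Submodule.comap_top]
    · intro k hk
      beta_reduce
      rcases Nat.eq_zero_or_pos k with rfl | hk1
      · simp
      · rw [if_neg (by omega), if_neg (by omega)]
        exact Submodule.comap_mono (by
          have := hWmono (k - 1) (by omega)
          rwa [show k - 1 + 1 = k + 1 - 1 by omega] at this)
    · intro k hk
      beta_reduce
      rcases Nat.eq_zero_or_pos k with rfl | hk1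
      · simp
      · rw [if_neg (by omega), finrank_comap_mkQ, hWrank (k - 1) (by omega), hL1]
        omega
    · intro k hk1 hk
      constructor
      · beta_reduce
        rw [if_neg (by omega)]
        have hle : ((W (k - 1)).comap π).map f ≤ (W (k - 1)).comap π := by
          rintro _ ⟨u, hu, rfl⟩
          have hu' : π u ∈ W (k - 1) := hu
          have h2 : π (f u) ∈ W (k - 1) := by
            rw [← hπf]
            exact hWf (k - 1) (by omega) ⟨π u, hu', rfl⟩
          exact h2
        refine Submodule.eq_of_le_of_finrank_le hle ?_
        have : ((W (k - 1)).comap π).map f = ((W (k - 1)).comap π).map (e : V →ₗ[ℂ] V) := rfl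
        rw [this, LinearEquiv.finrank_map_eq]
      · intro u hu
        beta_reduce at hu ⊢
        rw [if_neg (by omega)] at hu
        rw [Submodule.mem_comap] at hu
        rcases Nat.lt_or_ge k 2 with hk2 | hk2
        · -- k = 1
          have hk1' : k = 1 := by omega
          subst hk1'
          rw [show (1 : ℕ) - 1 = 0 from rfl] at hu ⊢
          rw [hW0, Submodule.mem_bot] at hu
          rw [if_pos rfl]
          have huL : u ∈ L := by
            rwa [← Submodule.Quotient.mk_eq_zero, ← Submodule.mkQ_apply]
          obtain ⟨a, rfl⟩ := Submodule.mem_span_singleton.mp huL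
          rw [_root_.map_smul, hgv, smul_zero]
          exact Submodule.zero_mem _
        · rw [if_neg (by omega), Submodule.mem_comap]
          have h3 := (hWmaps (k - 1) (by omega) (by omega)).2 (π u) hu
          rwa [hπg u] at h3

end AuxNilFlag

theorem nil_flag_exists_trigonometric (n : ℕ) (x : (Matrix (Fin n) (Fin n) ℂ)ˣ)
    (y : Matrix (Fin n) (Fin n) ℂ)
    (i : Fin n → ℂ) (j : Module.Dual ℂ (Fin n → ℂ))
    (hmom : (x : Matrix (Fin n) (Fin n) ℂ) * y *
        ((x⁻¹ : (Matrix (Fin n) (Fin n) ℂ)ˣ) : Matrix (Fin n) (Fin n) ℂ) - y +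
        Matrix.vecMulVec i (fun b => j (Pi.single b 1)) = 0)
    (hnil : IsNilpotent y) :
    ∃ V : ℕ → Submodule ℂ (Fin n → ℂ),
      V 0 = ⊥ ∧ V n = ⊤ ∧
      (∀ k, k < n → V k ≤ V (k + 1)) ∧
      (∀ k, k ≤ n → Module.finrank ℂ (V k) = k) ∧
      (∀ k, 1 ≤ k → k ≤ n →
        (V k).map ((x : Matrix (Fin n) (Fin n) ℂ).mulVecLin) = V k ∧
        (∀ u ∈ V k, y.mulVec u ∈ V (k - 1))) := by
  set P : Matrix (Fin n) (Fin n) ℂ := Matrix.vecMulVec i (fun b => j (Pi.single b 1)) with hP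
  set f : (Fin n → ℂ) →ₗ[ℂ] (Fin n → ℂ) := (x : Matrix (Fin n) (Fin n) ℂ).mulVecLin with hf
  set g : (Fin n → ℂ) →ₗ[ℂ] (Fin n → ℂ) := y.mulVecLin with hg
  -- P.mulVec u = j u • i
  have hPvec : ∀ u : Fin n → ℂ, P.mulVec u = j u • i := by
    intro u
    have hju : j u = ∑ b, u b * j (Pi.single b 1) := by
      conv_lhs => rw [← Finset.univ_sum_single u]
      rw [map_sum]
      congr 1
      funext b
      have hsingle : Pi.single b (u b) = u b • (Pi.single b 1 : Fin n → ℂ) := by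
        funext c
        by_cases h : c = b <;> simp [Pi.single_apply, h]
      rw [hsingle, _root_.map_smul, smul_eq_mul]
    funext a
    have hlhs : P.mulVec u a = ∑ b, i a * j (Pi.single b 1) * u b := by
      simp [hP, Matrix.mulVec, dotProduct, Matrix.vecMulVec_apply]
    rw [hlhs]
    simp only [Pi.smul_apply, smul_eq_mul]
    rw [hju, Finset.sum_mul]
    exact Finset.sum_congr rfl (fun b _ => by ring)
  have hfsurj : Function.Surjective f := by
    intro u
    refine ⟨((x⁻¹ : (Matrix (Fin n) (Fin n) ℂ)ˣ) : Matrix (Fin n) (Fin n) ℂ).mulVecLin u, ?_⟩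
    show (x : Matrix (Fin n) (Fin n) ℂ).mulVec
      (((x⁻¹ : (Matrix (Fin n) (Fin n) ℂ)ˣ) : Matrix (Fin n) (Fin n) ℂ).mulVec u) = u
    rw [Matrix.mulVec_mulVec, Units.mul_inv, Matrix.one_mulVec]
  have hgnil : IsNilpotent g := by
    obtain ⟨N, hN⟩ := hnil
    refine ⟨N, ?_⟩
    have key : ∀ m : ℕ, (y.mulVecLin) ^ m = (y ^ m).mulVecLin := by
      intro m
      induction m with
      | zero => simp [Matrix.mulVecLin_one]; rfl
      | succ m ih =>
        rw [pow_succ, pow_succ, Matrix.mulVecLin_mul, ih, Module.End.mul_eq_comp]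
    rw [hg, key, hN, Matrix.mulVecLin_zero]
  have hxyx : (x : Matrix (Fin n) (Fin n) ℂ) * y =
      y * (x : Matrix (Fin n) (Fin n) ℂ) - P * (x : Matrix (Fin n) (Fin n) ℂ) := by
    have h1 : (x : Matrix (Fin n) (Fin n) ℂ) * y *
        ((x⁻¹ : (Matrix (Fin n) (Fin n) ℂ)ˣ) : Matrix (Fin n) (Fin n) ℂ) = y - P := by
      rw [← sub_eq_zero]
      have h2 : (x : Matrix (Fin n) (Fin n) ℂ) * y *
          ((x⁻¹ : (Matrix (Fin n) (Fin n) ℂ)ˣ) : Matrix (Fin n) (Fin n) ℂ) - (y - P) =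
          (x : Matrix (Fin n) (Fin n) ℂ) * y *
          ((x⁻¹ : (Matrix (Fin n) (Fin n) ℂ)ˣ) : Matrix (Fin n) (Fin n) ℂ) - y + P := by
        abel
      rw [h2]
      exact hmom
    have h2 := congrArg (fun M => M * (x : Matrix (Fin n) (Fin n) ℂ)) h1
    rw [mul_assoc, Units.inv_mul, mul_one, sub_mul] at h2
    exact h2
  set j' : Module.Dual ℂ (Fin n → ℂ) := -(j.comp f) with hj'
  have hC : ∀ v, f (g v) - g (f v) = j' v • i := by
    intro v
    show (x : Matrix (Fin n) (Fin n) ℂ).mulVec (y.mulVec v) -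
      y.mulVec ((x : Matrix (Fin n) (Fin n) ℂ).mulVec v) = j' v • i
    rw [Matrix.mulVec_mulVec, Matrix.mulVec_mulVec, ← Matrix.sub_mulVec, hxyx]
    have h3 : y * (x : Matrix (Fin n) (Fin n) ℂ) - P * (x : Matrix (Fin n) (Fin n) ℂ) -
        y * (x : Matrix (Fin n) (Fin n) ℂ) = -(P * (x : Matrix (Fin n) (Fin n) ℂ)) := by
      abel
    rw [h3, Matrix.neg_mulVec, ← Matrix.mulVec_mulVec, hPvec]
    rw [hj']
    simp [hf, neg_smul, Matrix.mulVecLin_apply]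
  have hrank : Module.finrank ℂ (Fin n → ℂ) = n := Module.finrank_fin_fun ℂ
  obtain ⟨W, hW0, hWtop, hWmono, hWrank, hWmaps⟩ :=
    flag_aux n (Fin n → ℂ) hrank f g hfsurj hgnil ⟨i, j', hC⟩
  refine ⟨W, hW0, hWtop, fun k hk => hWmono k hk, fun k hk => hWrank k hk,
    fun k hk1 hk => ⟨(hWmaps k hk1 hk).1, fun u hu => ?_⟩⟩
  have h4 := (hWmaps k hk1 hk).2 u hu
  simpa [hg, Matrix.mulVecLin_apply] using h4
end

section
/- Let n ≥ 1 and let 𝕆₀ := {(X, v) ∈ Mₙ(ℂ) × ℂⁿ : X is regular unipotent and v ∉ range(X − I)}. Then GLₙ(ℂ) acts simply transitively on 𝕆₀ via g·(X,v) = (gXg⁻¹, gv): for any two pairs (X,v), (X',v') ∈ 𝕆₀ there exists a unique g ∈ GLₙ(ℂ) with gXg⁻¹ = X' and gv = v'. (This is the description, used in the proof of Theorem 5.8, of the open GLₙ-orbit in 𝐔 × V°, on which the action is free and transitive.) -/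
open Matrix

lemma end_pow_apply {n : ℕ} (f : Module.End ℂ (Fin n → ℂ)) (a b : ℕ) (w : Fin n → ℂ) :
    (f ^ (a + b)) w = (f ^ a) ((f ^ b) w) := by
  rw [pow_add]; rfl

lemma cyclic_indep {n : ℕ} (f : Module.End ℂ (Fin n → ℂ)) (w : Fin n → ℂ)
    (hfn : f ^ n = 0) (hw : (f ^ (n - 1)) w ≠ 0) :
    LinearIndependent ℂ (fun i : Fin n => (f ^ (i : ℕ)) w) := by
  rw [Fintype.linearIndependent_iff]
  intro c hc
  suffices h : ∀ m : ℕ, ∀ hm : m < n, c ⟨m, hm⟩ = 0 by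
    intro i; exact h i i.2
  intro m
  induction m using Nat.strong_induction_on with
  | _ m ih =>
    intro hm
    have hm' : m ≤ n - 1 := Nat.le_sub_one_of_lt hm
    have hkey : (f ^ (n - 1 - m)) (∑ i : Fin n, c i • (f ^ (i : ℕ)) w) = 0 := by
      rw [hc, map_zero]
    rw [map_sum] at hkey
    simp only [_root_.map_smul] at hkey
    have hsingle : ∀ i : Fin n, i ∈ Finset.univ → i ≠ ⟨m, hm⟩ →
        c i • (f ^ (n - 1 - m)) ((f ^ (i : ℕ)) w) = 0 := by
      intro i _ hi
      rcases lt_trichotomy (i : ℕ) m with h | h | h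
      · have := ih i h i.2
        have hci : c i = 0 := by
          have : (⟨(i : ℕ), i.2⟩ : Fin n) = i := by ext; rfl
          rwa [this] at *
        simp [hci]
      · exact absurd (Fin.ext h) hi
      · have hge : n ≤ n - 1 - m + (i : ℕ) := by omega
        rw [← end_pow_apply, pow_eq_zero_of_le hge hfn]
        simp
    rw [Finset.sum_eq_single_of_mem (⟨m, hm⟩ : Fin n) (Finset.mem_univ _) hsingle] at hkey
    rw [← end_pow_apply] at hkey
    have : n - 1 - m + m = n - 1 := by omega
    rw [this] at hkey
    rcases smul_eq_zero.mp hkey with h | h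
    · exact h
    · exact absurd h hw

lemma cyclic_ne_zero {n : ℕ} (hn : 1 ≤ n) (f : Module.End ℂ (Fin n → ℂ)) (v : Fin n → ℂ)
    (hfn : f ^ n = 0) (hf1 : f ^ (n - 1) ≠ 0) (hv : ∀ u, f u ≠ v) :
    (f ^ (n - 1)) v ≠ 0 := by
  haveI : NeZero n := ⟨by omega⟩
  haveI : Nonempty (Fin n) := ⟨⟨0, hn⟩⟩
  obtain ⟨w, hw⟩ : ∃ w, (f ^ (n - 1)) w ≠ 0 := by
    by_contra h; push_neg at h; exact hf1 (LinearMap.ext h)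
  have hli := cyclic_indep f w hfn hw
  have hcard : Fintype.card (Fin n) = Module.finrank ℂ (Fin n → ℂ) := by
    simp [Module.finrank_fin_fun]
  let b := basisOfLinearIndependentOfCardEqFinrank hli hcard
  have hb : ∀ i : Fin n, b i = (f ^ (i : ℕ)) w :=
    fun i => congrFun (coe_basisOfLinearIndependentOfCardEqFinrank hli hcard) i
  intro hv0
  set c : Fin n → ℂ := fun i => b.repr v i with hcdef
  have hvrep : v = ∑ i : Fin n, c i • (f ^ (i : ℕ)) w := by
    conv_lhs => rw [← b.sum_repr v]
    exact Finset.sum_congr rfl fun i _ => by rw [hb i]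
  have hc0 : c 0 = 0 := by
    have h1 : (f ^ (n - 1)) v = ∑ i : Fin n, c i • (f ^ (n - 1 + (i : ℕ))) w := by
      rw [hvrep, map_sum]
      exact Finset.sum_congr rfl fun i _ => by rw [_root_.map_smul, ← end_pow_apply]
    have h2 : ∑ i : Fin n, c i • (f ^ (n - 1 + (i : ℕ))) w = c 0 • (f ^ (n - 1)) w := by
      rw [Finset.sum_eq_single_of_mem (0 : Fin n) (Finset.mem_univ _)]
      · simp
      · intro i _ hi
        have hge : n ≤ n - 1 + (i : ℕ) := by
          have : (i : ℕ) ≠ 0 := fun h => hi (Fin.ext h)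
          omega
        rw [pow_eq_zero_of_le hge hfn]; simp
    rw [hv0, h2] at h1
    rcases smul_eq_zero.mp h1.symm with h | h
    · exact h
    · exact absurd h hw
  apply hv (∑ i : Fin n, c i • (f ^ ((i : ℕ) - 1)) w)
  rw [map_sum, hvrep]
  refine Finset.sum_congr rfl fun i _ => ?_
  rw [_root_.map_smul]
  by_cases hi : i = 0
  · subst hi; rw [hc0]; simp
  · have h2 : (1 : ℕ) + ((i : ℕ) - 1) = (i : ℕ) := by
      have : (i : ℕ) ≠ 0 := fun h => hi (Fin.ext h)
      omega
    conv_rhs => rw [← h2, end_pow_apply, pow_one]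

/- STATEMENT 8: GLₙ(ℂ) acts simply transitively on
𝕆₀ = {(X,v) : X regular unipotent, v ∉ range(X − I)} via g·(X,v) = (gXg⁻¹, gv). -/

/-- `X` is regular unipotent: `(X − I)ⁿ = 0` and `(X − I)^{n−1} ≠ 0`. -/
def IsRegUnipotent {n : ℕ} (X : Matrix (Fin n) (Fin n) ℂ) : Prop :=
  (X - 1) ^ n = 0 ∧ (X - 1) ^ (n - 1) ≠ 0

theorem open_orbit_simply_transitive (n : ℕ) (hn : 1 ≤ n)
    (X X' : Matrix (Fin n) (Fin n) ℂ) (v v' : Fin n → ℂ)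
    (hX : IsRegUnipotent X) (hv : ∀ u, (X - 1).mulVec u ≠ v)
    (hX' : IsRegUnipotent X') (hv' : ∀ u, (X' - 1).mulVec u ≠ v') :
    ∃! g : (Matrix (Fin n) (Fin n) ℂ)ˣ,
      (g : Matrix (Fin n) (Fin n) ℂ) * X *
          ((g⁻¹ : (Matrix (Fin n) (Fin n) ℂ)ˣ) : Matrix (Fin n) (Fin n) ℂ) = X' ∧
      (g : Matrix (Fin n) (Fin n) ℂ).mulVec v = v' := by
  classical
  haveI : NeZero n := ⟨by omega⟩
  haveI : Nonempty (Fin n) := ⟨⟨0, hn⟩⟩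
  set φ : Matrix (Fin n) (Fin n) ℂ ≃ₐ[ℂ] Module.End ℂ (Fin n → ℂ) :=
    Matrix.toLinAlgEquiv' with hφdef
  have hφapp : ∀ (M : Matrix (Fin n) (Fin n) ℂ) (u : Fin n → ℂ), φ M u = M.mulVec u := by
    intro M u
    simp [hφdef, Matrix.toLinAlgEquiv'_apply, Matrix.toLin'_apply]
  set f : Module.End ℂ (Fin n → ℂ) := φ (X - 1) with hfdef
  set f' : Module.End ℂ (Fin n → ℂ) := φ (X' - 1) with hf'def
  have hfn : f ^ n = 0 := by rw [hfdef, ← map_pow, hX.1, map_zero]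
  have hfn' : f' ^ n = 0 := by rw [hf'def, ← map_pow, hX'.1, map_zero]
  have hf1 : f ^ (n - 1) ≠ 0 := by
    rw [hfdef, ← map_pow]
    intro h
    exact hX.2 (by simpa using φ.injective (by rw [h, map_zero]))
  have hf1' : f' ^ (n - 1) ≠ 0 := by
    rw [hf'def, ← map_pow]
    intro h
    exact hX'.2 (by simpa using φ.injective (by rw [h, map_zero]))
  have hvf : ∀ u, f u ≠ v := by intro u; rw [hfdef, hφapp]; exact hv u
  have hvf' : ∀ u, f' u ≠ v' := by intro u; rw [hf'def, hφapp]; exact hv' u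
  have hw := cyclic_ne_zero hn f v hfn hf1 hvf
  have hw' := cyclic_ne_zero hn f' v' hfn' hf1' hvf'
  have hli := cyclic_indep f v hfn hw
  have hli' := cyclic_indep f' v' hfn' hw'
  have hcard : Fintype.card (Fin n) = Module.finrank ℂ (Fin n → ℂ) := by
    simp [Module.finrank_fin_fun]
  set b := basisOfLinearIndependentOfCardEqFinrank hli hcard with hbdef
  set b' := basisOfLinearIndependentOfCardEqFinrank hli' hcard with hb'def
  have hb : ∀ i : Fin n, b i = (f ^ (i : ℕ)) v :=
    fun i => congrFun (coe_basisOfLinearIndependentOfCardEqFinrank hli hcard) i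
  have hb' : ∀ i : Fin n, b' i = (f' ^ (i : ℕ)) v' :=
    fun i => congrFun (coe_basisOfLinearIndependentOfCardEqFinrank hli' hcard) i
  set e := b.equiv b' (Equiv.refl (Fin n)) with hedef
  have he : ∀ m : ℕ, e ((f ^ m) v) = (f' ^ m) v' := by
    intro m
    by_cases hm : m < n
    · have h1 : (f ^ m) v = b ⟨m, hm⟩ := (hb ⟨m, hm⟩).symm
      rw [h1, hedef, Module.Basis.equiv_apply, Equiv.refl_apply, hb']
    · push_neg at hm
      rw [pow_eq_zero_of_le hm hfn, pow_eq_zero_of_le hm hfn']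
      simp
  -- key commutation for e
  have hef : e.toLinearMap * f = f' * e.toLinearMap := by
    rw [Module.End.mul_eq_comp, Module.End.mul_eq_comp]
    apply b.ext
    intro i
    simp only [LinearMap.comp_apply, LinearEquiv.coe_coe, hb i]
    have h1 : f ((f ^ (i : ℕ)) v) = (f ^ (1 + (i : ℕ))) v := by
      rw [end_pow_apply, pow_one]
    have h2 : f' ((f' ^ (i : ℕ)) v') = (f' ^ (1 + (i : ℕ))) v' := by
      rw [end_pow_apply, pow_one]
    rw [h1, he, he, ← h2]
  -- uniqueness of intertwiners
  have huniq : ∀ u : Module.End ℂ (Fin n → ℂ),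
      u * f = f' * u → u v = v' → u = e.toLinearMap := by
    intro u hcomm huv
    have hpow : ∀ m : ℕ, u * f ^ m = f' ^ m * u := by
      intro m
      induction m with
      | zero => simp
      | succ k ih =>
        rw [pow_succ, pow_succ, ← mul_assoc, ih, mul_assoc, hcomm, ← mul_assoc]
    apply b.ext
    intro i
    have h1 : u ((f ^ (i : ℕ)) v) = (f' ^ (i : ℕ)) (u v) := by
      have := congrArg (fun (g : Module.End ℂ (Fin n → ℂ)) => g v) (hpow (i : ℕ))
      simpa [Module.End.mul_apply] using this
    rw [hb i, h1, huv]
    exact (he (i : ℕ)).symm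
  -- the unit
  have hinv1 : e.toLinearMap * e.symm.toLinearMap = 1 := by
    ext x; simp [Module.End.mul_apply]
  have hinv2 : e.symm.toLinearMap * e.toLinearMap = 1 := by
    ext x; simp [Module.End.mul_apply]
  refine ⟨⟨φ.symm e.toLinearMap, φ.symm e.symm.toLinearMap, ?_, ?_⟩, ⟨?_, ?_⟩, ?_⟩
  · rw [← _root_.map_mul, hinv1, _root_.map_one]
  · rw [← _root_.map_mul, hinv2, _root_.map_one]
  · -- conjugation
    show φ.symm e.toLinearMap * X * φ.symm e.symm.toLinearMap = X'
    apply φ.injective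
    rw [_root_.map_mul, _root_.map_mul, AlgEquiv.apply_symm_apply, AlgEquiv.apply_symm_apply]
    have hφX : φ X = f + 1 := by rw [hfdef, map_sub, _root_.map_one]; abel
    have hφX' : φ X' = f' + 1 := by rw [hf'def, map_sub, _root_.map_one]; abel
    rw [hφX, hφX']
    calc e.toLinearMap * (f + 1) * e.symm.toLinearMap
        = (f' * e.toLinearMap + e.toLinearMap) * e.symm.toLinearMap := by
          rw [mul_add, mul_one, hef]
      _ = f' * (e.toLinearMap * e.symm.toLinearMap) + e.toLinearMap * e.symm.toLinearMap := by
          rw [add_mul, mul_assoc]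
      _ = f' + 1 := by rw [hinv1, mul_one]
  · -- vector
    show (φ.symm e.toLinearMap).mulVec v = v'
    rw [← hφapp, AlgEquiv.apply_symm_apply]
    have := he 0
    simpa using this
  · -- uniqueness
    rintro h ⟨hXeq, hveq⟩
    have hMX : (h : Matrix (Fin n) (Fin n) ℂ) * X = X' * h := by
      calc (h : Matrix (Fin n) (Fin n) ℂ) * X
          = (h : Matrix (Fin n) (Fin n) ℂ) * X * ↑h⁻¹ * ↑h := by
            rw [Units.inv_mul_cancel_right]
        _ = X' * ↑h := by rw [hXeq]
    set u : Module.End ℂ (Fin n → ℂ) := φ (h : Matrix (Fin n) (Fin n) ℂ) with hudef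
    have hcommu : u * f = f' * u := by
      rw [hudef, hfdef, hf'def, ← _root_.map_mul, ← _root_.map_mul]
      congr 1
      rw [mul_sub, sub_mul, mul_one, one_mul, hMX]
    have huv : u v = v' := by rw [hudef, hφapp]; exact hveq
    have hu := huniq u hcommu huv
    ext1
    show (h : Matrix (Fin n) (Fin n) ℂ) = φ.symm e.toLinearMap
    rw [← hu, hudef, AlgEquiv.symm_apply_apply]
end

section
/- Let g ∈ Mₙ(ℂ) have n pairwise distinct eigenvalues, let v ∈ ℂⁿ be nonzero, and let m := dim span{g^k v : k ≥ 0} (the dimension of the smallest g-invariant subspace containing v). Then the set of complete flags 0 = V₀ ⊆ V₁ ⊆ ⋯ ⊆ Vₙ = ℂⁿ satisfying g V_k ⊆ V_k for all k and v ∈ V_m is finite of cardinality exactly m! · (n−m)!. (This is the fiber count underlying Proposition 5.5(ii): over the regular locus, π_{n,m} : X̃_{n,m} → X_{n,m} is a Galois covering with Galois group 𝕊_m × 𝕊_{n−m}.) -/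
open Module Submodule Polynomial

section aux
variable {𝕜 V : Type*} [Field 𝕜] [AddCommGroup V] [Module 𝕜 V]
variable {ι : Type*} [Fintype ι] [DecidableEq ι]

lemma aeval_prod_eigen (f : Module.End 𝕜 V) {b : V} {c : 𝕜}
    (hb : f b = c • b) (s : Finset ι) (ν : ι → 𝕜) :
    Polynomial.aeval f (∏ k ∈ s, (X - C (ν k))) b = (∏ k ∈ s, (c - ν k)) • b := by
  induction s using Finset.induction with
  | empty => simp
  | @insert a s hx ih =>
    rw [Finset.prod_insert hx, Finset.prod_insert hx, map_mul, Module.End.mul_apply, ih,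
      map_smul, map_sub, aeval_X, aeval_C, LinearMap.sub_apply, Module.algebraMap_end_apply,
      hb, ← sub_smul, smul_smul, mul_comm]

lemma aeval_mem (f : Module.End 𝕜 V) (W : Submodule 𝕜 V) (hW : ∀ u ∈ W, f u ∈ W)
    (p : 𝕜[X]) : ∀ u ∈ W, Polynomial.aeval f p u ∈ W := by
  have hpow : ∀ (N : ℕ), ∀ u ∈ W, (f ^ N) u ∈ W := by
    intro N
    induction N with
    | zero => intro u hu; simpa using hu
    | succ N ih =>
      intro u hu
      rw [pow_succ, Module.End.mul_apply]
      exact ih _ (hW u hu)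
  induction p using Polynomial.induction_on' with
  | add p q hp hq =>
    intro u hu
    rw [map_add, LinearMap.add_apply]
    exact W.add_mem (hp u hu) (hq u hu)
  | monomial N a =>
    intro u hu
    rw [aeval_monomial, Module.End.mul_apply, Module.algebraMap_end_apply]
    exact W.smul_mem _ (hpow N u hu)

lemma component_mem (f : Module.End 𝕜 V) (μ : ι → 𝕜) (hμ : Function.Injective μ)
    (B : Basis ι 𝕜 V) (hb : ∀ i, f (B i) = μ i • B i)
    (W : Submodule 𝕜 V) (hW : ∀ u ∈ W, f u ∈ W) {x : V} (hx : x ∈ W) (i : ι) :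
    (B.repr x i) • B i ∈ W := by
  set c : 𝕜 := ∏ k ∈ Finset.univ.erase i, (μ i - μ k) with hc
  set q : 𝕜[X] := ∏ k ∈ Finset.univ.erase i, (X - C (μ k)) with hq
  have key : Polynomial.aeval f q x = (c * B.repr x i) • B i := by
    conv_lhs => rw [← B.sum_repr x, map_sum]
    rw [Finset.sum_congr rfl (fun j _ => by
      rw [map_smul, hq, aeval_prod_eigen f (hb j)])]
    rw [Finset.sum_eq_single i]
    · rw [smul_smul, mul_comm, hc]
    · intro j _ hj
      have hz : (∏ k ∈ Finset.univ.erase i, (μ j - μ k)) = 0 :=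
        Finset.prod_eq_zero (Finset.mem_erase.mpr ⟨hj, Finset.mem_univ j⟩) (by simp)
      rw [hz, zero_smul, smul_zero]
    · simp
  have hne : c ≠ 0 := by
    rw [hc]
    apply Finset.prod_ne_zero_iff.mpr
    intro k hk
    exact sub_ne_zero.mpr fun h => (Finset.mem_erase.mp hk).1 (hμ h).symm
  have h2 := aeval_mem f W hW q x hx
  rw [key] at h2
  have h3 := W.smul_mem c⁻¹ h2
  rwa [smul_smul, ← mul_assoc, inv_mul_cancel₀ hne, one_mul] at h3

end aux

open Module Submodule

section comb
variable {α β : Type*} (p : α → Prop) (q : β → Prop) [DecidablePred p] [DecidablePred q]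

/-- glue two equivalences on a predicate and its complement -/
def glueEquiv (e₁ : {x // p x} ≃ {y // q y}) (e₂ : {x // ¬ p x} ≃ {y // ¬ q y}) : α ≃ β :=
  (Equiv.sumCompl p).symm.trans ((e₁.sumCongr e₂).trans (Equiv.sumCompl q))

lemma glueEquiv_pos (e₁ : {x // p x} ≃ {y // q y}) (e₂ : {x // ¬ p x} ≃ {y // ¬ q y})
    (x : α) (hx : p x) : glueEquiv p q e₁ e₂ x = e₁ ⟨x, hx⟩ := by
  simp [glueEquiv, Equiv.sumCompl_symm_apply_of_pos (p := p) hx]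

lemma glueEquiv_neg (e₁ : {x // p x} ≃ {y // q y}) (e₂ : {x // ¬ p x} ≃ {y // ¬ q y})
    (x : α) (hx : ¬ p x) : glueEquiv p q e₁ e₂ x = e₂ ⟨x, hx⟩ := by
  simp [glueEquiv, Equiv.sumCompl_symm_apply_of_neg (p := p) hx]

/-- equivalences respecting predicates correspond to pairs of restricted equivalences -/
noncomputable def subtypePairEquiv :
    {σ : α ≃ β // ∀ x, q (σ x) ↔ p x} ≃
      ({x // p x} ≃ {y // q y}) × ({x // ¬ p x} ≃ {y // ¬ q y}) where
  toFun σ := (Equiv.subtypeEquiv σ.1 (fun x => (σ.2 x).symm),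
              Equiv.subtypeEquiv σ.1 (fun x => (not_congr (σ.2 x)).symm))
  invFun e := ⟨glueEquiv p q e.1 e.2, by
      intro x
      by_cases hx : p x
      · rw [glueEquiv_pos p q _ _ x hx]
        simpa [hx] using (e.1 ⟨x, hx⟩).2
      · rw [glueEquiv_neg p q _ _ x hx]
        simpa [hx] using (e.2 ⟨x, hx⟩).2⟩
  left_inv σ := by
    ext x
    by_cases hx : p x
    · rw [glueEquiv_pos p q _ _ x hx]; rfl
    · rw [glueEquiv_neg p q _ _ x hx]; rfl
  right_inv e := by
    obtain ⟨e₁, e₂⟩ := e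
    refine Prod.ext ?_ ?_ <;> dsimp <;> ext x <;>
      simp only [Equiv.subtypeEquiv_apply]
    · rw [glueEquiv_pos p q _ _ x.1 x.2]
    · rw [glueEquiv_neg p q _ _ x.1 x.2]

end comb

lemma card_fin_lt (n m : ℕ) (h : m ≤ n) :
    Fintype.card {j : Fin n // (j : ℕ) < m} = m := by
  have e : {j : Fin n // (j : ℕ) < m} ≃ Fin m :=
    { toFun := fun j => ⟨j.1, j.2⟩
      invFun := fun j => ⟨⟨j.1, lt_of_lt_of_le j.2 h⟩, j.2⟩
      left_inv := fun j => rfl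
      right_inv := fun j => rfl }
  rw [Fintype.card_congr e, Fintype.card_fin]

open Module Submodule Polynomial

lemma exists_eigenvector_of_root {n : ℕ} (g : Matrix (Fin n) (Fin n) ℂ) {μ : ℂ}
    (h : μ ∈ g.charpoly.roots) : ∃ w, w ≠ 0 ∧ g.mulVec w = μ • w := by
  classical
  have hroot : g.charpoly.IsRoot μ := isRoot_of_mem_roots h
  have hmap : (Polynomial.evalRingHom μ).mapMatrix (Matrix.charmatrix g)
      = Matrix.diagonal (fun _ => μ) - g := by
    ext i j
    by_cases hij : i = j
    · subst hij
      simp [Matrix.charmatrix_apply_eq]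
    · simp [Matrix.charmatrix_apply_ne _ _ _ hij, Matrix.diagonal_apply_ne _ hij]
  have hdet : (Matrix.diagonal (fun _ => μ) - g).det = 0 := by
    rw [← hmap, ← RingHom.map_det]
    simpa [Matrix.charpoly] using hroot
  obtain ⟨w, hw0, hw⟩ := (Matrix.exists_mulVec_eq_zero_iff).2 hdet
  refine ⟨w, hw0, ?_⟩
  rw [Matrix.sub_mulVec] at hw
  have hdiag : (Matrix.diagonal (fun _ => μ)).mulVec w = μ • w := by
    funext i
    rw [Matrix.mulVec_diagonal]
    rfl
  rw [hdiag] at hw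
  have := sub_eq_zero.mp hw
  exact this.symm
theorem flag_fiber_count (n : ℕ) (g : Matrix (Fin n) (Fin n) ℂ)
    (hg : g.charpoly.roots.toFinset.card = n)
    (v : Fin n → ℂ) (hv : v ≠ 0) (m : ℕ)
    (hm : m = Module.finrank ℂ
      (Submodule.span ℂ (Set.range fun k : ℕ => (g ^ k).mulVec v))) :
    {V : ℕ → Submodule ℂ (Fin n → ℂ) |
        Monotone V ∧ (∀ k, k ≤ n → Module.finrank ℂ (V k) = k) ∧
        (∀ k, ∀ u ∈ V k, g.mulVec u ∈ V k) ∧ v ∈ V m}.Finite ∧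
    {V : ℕ → Submodule ℂ (Fin n → ℂ) |
        Monotone V ∧ (∀ k, k ≤ n → Module.finrank ℂ (V k) = k) ∧
        (∀ k, ∀ u ∈ V k, g.mulVec u ∈ V k) ∧ v ∈ V m}.ncard
      = m.factorial * (n - m).factorial := by
  classical
  have hn : 0 < n := by
    rcases Nat.eq_zero_or_pos n with h0 | h
    · exfalso; subst h0; exact hv (funext fun i => i.elim0)
    · exact h
  set E := g.charpoly.roots.toFinset with hEdef
  haveI hEne : Nonempty ↥E := (Finset.card_pos.mp (hg ▸ hn)).to_subtype
  set f : Module.End ℂ (Fin n → ℂ) := g.mulVecLin with hf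
  have hfapp : ∀ u, f u = g.mulVec u := fun u => rfl
  have hfpow : ∀ (k : ℕ) (u : Fin n → ℂ), (f ^ k) u = (g ^ k).mulVec u := by
    intro k
    induction k with
    | zero => intro u; simp
    | succ k ih =>
      intro u
      rw [pow_succ, pow_succ, Module.End.mul_apply, hfapp, ih, Matrix.mulVec_mulVec]
  -- eigenvectors
  have hEV : ∀ i : ↥E, ∃ w, w ≠ 0 ∧ g.mulVec w = (i : ℂ) • w :=
    fun i => exists_eigenvector_of_root g (Multiset.mem_toFinset.mp i.2)
  choose w hw0 hwe using hEV
  have hwf : ∀ i : ↥E, f (w i) = (i : ℂ) • w i := fun i => hwe i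
  have hli : LinearIndependent ℂ w :=
    Module.End.eigenvectors_linearIndependent' f (fun i : ↥E => (i : ℂ))
      Subtype.coe_injective w
      (fun i => ⟨Module.End.mem_eigenspace_iff.mpr (hwf i), hw0 i⟩)
  have hcard : Fintype.card ↥E = Module.finrank ℂ (Fin n → ℂ) := by
    rw [Fintype.card_coe, hg, Module.finrank_pi, Fintype.card_fin]
  set B : Basis ↥E ℂ (Fin n → ℂ) := basisOfLinearIndependentOfCardEqFinrank hli hcard
    with hBdef
  have hBe : ∀ i : ↥E, f (B i) = (i : ℂ) • B i := by
    intro i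
    rw [hBdef, coe_basisOfLinearIndependentOfCardEqFinrank]
    exact hwf i
  -- invariance of spans of eigenvectors
  have hinvF : ∀ (s : Set ↥E), ∀ u ∈ Submodule.span ℂ (B '' s),
      f u ∈ Submodule.span ℂ (B '' s) := by
    intro s u hu
    induction hu using Submodule.span_induction with
    | mem x hx =>
      obtain ⟨i, hi, rfl⟩ := hx
      rw [hBe i]
      exact Submodule.smul_mem _ _ (Submodule.subset_span ⟨i, hi, rfl⟩)
    | zero => rw [map_zero]; exact Submodule.zero_mem _
    | add x y _ _ hx hy => rw [map_add]; exact Submodule.add_mem _ hx hy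
    | smul a x _ hx => rw [map_smul]; exact Submodule.smul_mem _ a hx
  -- classification of invariant subspaces
  have hWspan : ∀ W : Submodule ℂ (Fin n → ℂ), (∀ u ∈ W, f u ∈ W) →
      W = Submodule.span ℂ (B '' {i | B i ∈ W}) := by
    intro W hW
    apply le_antisymm
    · intro x hx
      apply B.mem_span_image.mpr
      intro i hi
      have hci : B.repr x i ≠ 0 := Finsupp.mem_support_iff.mp hi
      have hc := component_mem f (fun i : ↥E => (i : ℂ)) Subtype.coe_injective B hBe
        W hW hx i
      have h3 := W.smul_mem (B.repr x i)⁻¹ hc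
      rwa [smul_smul, inv_mul_cancel₀ hci, one_smul] at h3
    · rw [Submodule.span_le]
      rintro y ⟨i, hi, rfl⟩
      exact hi
  -- finrank of spans of eigenvectors
  have hfr : ∀ t : Finset ↥E,
      Module.finrank ℂ (Submodule.span ℂ (B '' ↑t)) = t.card := by
    intro t
    have h1 : B '' ↑t = Set.range (⇑B ∘ (Subtype.val : {x // x ∈ t} → ↥E)) := by
      rw [Set.range_comp, Subtype.range_val]
    rw [h1, finrank_span_eq_card (B.linearIndependent.comp _ Subtype.val_injective),
      Fintype.card_coe]
  -- the support of v
  set SS : Finset ↥E := (B.repr v).support with hSSdef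
  -- the cyclic subspace is spanned by the eigenvectors in the support
  have hU : Submodule.span ℂ (Set.range fun k : ℕ => (g ^ k).mulVec v)
      = Submodule.span ℂ (B '' ↑SS) := by
    apply le_antisymm
    · have hind : ∀ k : ℕ, (f ^ k) v ∈ Submodule.span ℂ (B '' ↑SS) := by
        intro k
        induction k with
        | zero =>
          rw [pow_zero, Module.End.one_apply]
          exact B.mem_span_image.mpr subset_rfl
        | succ k ih =>
          rw [pow_succ', Module.End.mul_apply]
          exact hinvF _ _ ih
      rw [Submodule.span_le]
      rintro y ⟨k, rfl⟩
      have h := hind k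
      rw [hfpow] at h
      exact h
    · rw [Submodule.span_le]
      rintro y ⟨i, hi, rfl⟩
      set U := Submodule.span ℂ (Set.range fun k : ℕ => (g ^ k).mulVec v) with hUdef
      have hUinv : ∀ u ∈ U, f u ∈ U := by
        intro u hu
        induction hu using Submodule.span_induction with
        | mem x hx =>
          obtain ⟨k, rfl⟩ := hx
          have h : f ((g ^ k).mulVec v) ∈ U := by
            rw [← hfpow, ← Module.End.mul_apply, ← pow_succ', hfpow]
            exact Submodule.subset_span ⟨k + 1, rfl⟩
          exact h
        | zero => rw [map_zero]; exact Submodule.zero_mem _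
        | add x y _ _ hx hy => rw [map_add]; exact Submodule.add_mem _ hx hy
        | smul a x _ hx => rw [map_smul]; exact Submodule.smul_mem _ a hx
      have hvU : v ∈ U := Submodule.subset_span ⟨0, by simp⟩
      have hci : B.repr v i ≠ 0 := Finsupp.mem_support_iff.mp (Finset.mem_coe.mp hi)
      have hc := component_mem f (fun i : ↥E => (i : ℂ)) Subtype.coe_injective B hBe
        U hUinv hvU i
      have h3 := U.smul_mem (B.repr v i)⁻¹ hc
      rwa [smul_smul, inv_mul_cancel₀ hci, one_smul] at h3
  have hScard : SS.card = m := by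
    rw [hm, hU, hfr]
  have hmn : m ≤ n := by
    rw [← hScard, ← hg, ← Fintype.card_coe E]
    exact Finset.card_le_univ SS
  -- the chain construction
  set Tσ : (Fin n ≃ ↥E) → ℕ → Finset ↥E :=
    fun σ k => (Finset.univ.filter (fun j : Fin n => (j : ℕ) < k)).image σ with hTσdef
  set F : (Fin n ≃ ↥E) → ℕ → Submodule ℂ (Fin n → ℂ) :=
    fun σ k => Submodule.span ℂ (B '' ↑(Tσ σ k)) with hFdef
  have hTσmem : ∀ σ k i, i ∈ Tσ σ k ↔ ∃ j : Fin n, (j : ℕ) < k ∧ σ j = i := by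
    intro σ k i
    simp [hTσdef]
  have hTσmono : ∀ σ, Monotone (Tσ σ) := by
    intro σ a b hab
    apply Finset.image_subset_image
    intro j hj
    simp only [Finset.mem_filter, Finset.mem_univ, true_and] at hj ⊢
    omega
  have hTσcard : ∀ σ, ∀ k, k ≤ n → (Tσ σ k).card = k := by
    intro σ k hk
    rw [hTσdef]
    dsimp only
    rw [Finset.card_image_of_injective _ σ.injective]
    have h1 := card_fin_lt n k hk
    rwa [Fintype.card_subtype] at h1
  set A : Set (Fin n ≃ ↥E) := {σ | ∀ j : Fin n, σ j ∈ SS ↔ (j : ℕ) < m} with hAdef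
  -- forward inclusion
  have hFA : F '' A ⊆ {V : ℕ → Submodule ℂ (Fin n → ℂ) |
      Monotone V ∧ (∀ k, k ≤ n → Module.finrank ℂ (V k) = k) ∧
      (∀ k, ∀ u ∈ V k, g.mulVec u ∈ V k) ∧ v ∈ V m} := by
    rintro _ ⟨σ, hσ, rfl⟩
    refine ⟨?_, ?_, ?_, ?_⟩
    · intro a b hab
      exact Submodule.span_mono (Set.image_mono (Finset.coe_subset.mpr (hTσmono σ hab)))
    · intro k hk
      rw [hFdef]
      dsimp only
      rw [hfr, hTσcard σ k hk]
    · intro k u hu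
      have := hinvF ↑(Tσ σ k) u hu
      rwa [hfapp] at this
    · have hTm : Tσ σ m = SS := by
        ext i
        rw [hTσmem]
        constructor
        · rintro ⟨j, hj, rfl⟩
          exact (hσ j).mpr hj
        · intro hi
          refine ⟨σ.symm i, ?_, σ.apply_symm_apply i⟩
          have h2 := hσ (σ.symm i)
          rw [σ.apply_symm_apply] at h2
          exact h2.mp hi
      show v ∈ F σ m
      rw [hFdef]
      dsimp only
      rw [hTm]
      exact B.mem_span_image.mpr subset_rfl
  -- backward inclusion
  have hback : {V : ℕ → Submodule ℂ (Fin n → ℂ) |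
      Monotone V ∧ (∀ k, k ≤ n → Module.finrank ℂ (V k) = k) ∧
      (∀ k, ∀ u ∈ V k, g.mulVec u ∈ V k) ∧ v ∈ V m} ⊆ F '' A := by
    rintro V ⟨hVmono, hVrank, hVinvg, hVm⟩
    have hVinv : ∀ k, ∀ u ∈ V k, f u ∈ V k := by
      intro k u hu
      rw [hfapp]
      exact hVinvg k u hu
    set T : ℕ → Finset ↥E := fun k => Finset.univ.filter (fun i => B i ∈ V k) with hTdef
    have hTmem : ∀ k i, i ∈ T k ↔ B i ∈ V k := by
      intro k i
      simp [hTdef]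
    have hVspan : ∀ k, V k = Submodule.span ℂ (B '' ↑(T k)) := by
      intro k
      rw [hWspan (V k) (hVinv k)]
      congr 1
      apply congrArg
      ext i
      simp [hTdef]
    have hTcard : ∀ k, k ≤ n → (T k).card = k := by
      intro k hk
      have h1 := hVrank k hk
      rwa [hVspan k, hfr] at h1
    have hTmono : Monotone T := by
      intro a b hab i hi
      rw [hTmem] at *
      exact hVmono hab hi
    have hsingle : ∀ j : Fin n, ∃ a, T ((j : ℕ) + 1) \ T (j : ℕ) = {a} := by
      intro j
      apply Finset.card_eq_one.mp
      rw [Finset.card_sdiff_of_subset (hTmono (Nat.le_succ _)),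
        hTcard _ (by omega), hTcard _ (by omega)]
      omega
    choose e he using hsingle
    have heMem : ∀ j : Fin n, e j ∈ T ((j : ℕ) + 1) ∧ e j ∉ T (j : ℕ) := by
      intro j
      have h1 : e j ∈ T ((j : ℕ) + 1) \ T (j : ℕ) := by
        rw [he j]; exact Finset.mem_singleton_self _
      exact Finset.mem_sdiff.mp h1
    have heinj : Function.Injective e := by
      have hlt : ∀ j j' : Fin n, (j : ℕ) < (j' : ℕ) → e j ≠ e j' := by
        intro j j' hjj' hC
        have h1 : e j ∈ T ((j : ℕ) + 1) := (heMem j).1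
        have h2 : e j' ∉ T (j' : ℕ) := (heMem j').2
        have h3 : e j ∈ T (j' : ℕ) := hTmono (by omega) h1
        rw [hC] at h3
        exact h2 h3
      intro j j' hC
      by_contra hne
      rcases lt_trichotomy (j : ℕ) (j' : ℕ) with h | h | h
      · exact hlt j j' h hC
      · exact hne (Fin.ext h)
      · exact hlt j' j h hC.symm
    have hebij : Function.Bijective e :=
      (Fintype.bijective_iff_injective_and_card e).mpr
        ⟨heinj, by rw [Fintype.card_fin, Fintype.card_coe, hg]⟩
    set σ := Equiv.ofBijective e hebij with hσdef
    have hσe : ∀ j, σ j = e j := fun j => rfl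
    have hTup : ∀ k, k ≤ n → T k = Tσ σ k := by
      intro k
      induction k with
      | zero =>
        intro _
        have h0 : T 0 = ∅ := Finset.card_eq_zero.mp (hTcard 0 (by omega))
        have h0' : Tσ σ 0 = ∅ := by
          ext i
          rw [hTσmem]
          simp
        rw [h0, h0']
      | succ k ih =>
        intro hk1
        have hkn : k ≤ n := by omega
        have hk : k < n := by omega
        set jk : Fin n := ⟨k, hk⟩ with hjkdef
        have h1 : T (k + 1) \ T k = {e jk} := he jk
        have hTk : T (k + 1) = T k ∪ {e jk} := by
          rw [← Finset.union_sdiff_of_subset (hTmono (Nat.le_succ k)), h1]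
        have hTσk : Tσ σ (k + 1) = Tσ σ k ∪ {σ jk} := by
          ext i
          rw [hTσmem, Finset.mem_union, hTσmem, Finset.mem_singleton]
          constructor
          · rintro ⟨j, hj, rfl⟩
            rcases Nat.lt_or_ge (j : ℕ) k with h | h
            · exact Or.inl ⟨j, h, rfl⟩
            · have hjeq : j = jk := Fin.ext (by simp [hjkdef]; omega)
              subst hjeq
              exact Or.inr rfl
          · rintro (⟨j, hj, rfl⟩ | rfl)
            · exact ⟨j, by omega, rfl⟩
            · exact ⟨jk, by simp [hjkdef], rfl⟩
        rw [hTk, hTσk, ih hkn, hσe]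
    have hTall : ∀ k, T k = Tσ σ k := by
      intro k
      rcases le_or_gt k n with h | h
      · exact hTup k h
      · have hTn : T n = Finset.univ := Finset.eq_univ_of_card _
          (by rw [hTcard n le_rfl, Fintype.card_coe, hg])
        have h1 : T k = Finset.univ := Finset.eq_univ_iff_forall.mpr
          (fun i => hTmono (le_of_lt h) (hTn ▸ Finset.mem_univ i))
        have h2 : Tσ σ k = Finset.univ := Finset.eq_univ_iff_forall.mpr
          (fun i => (hTσmem σ k i).mpr
            ⟨σ.symm i, by have := (σ.symm i).2; omega, σ.apply_symm_apply i⟩)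
        rw [h1, h2]
    have hTmSS : T m = SS := by
      have hsub : SS ⊆ T m := by
        intro i hi
        rw [hTmem]
        have hci : B.repr v i ≠ 0 := Finsupp.mem_support_iff.mp hi
        have hc := component_mem f (fun i : ↥E => (i : ℂ)) Subtype.coe_injective B hBe
          (V m) (hVinv m) hVm i
        have h3 := (V m).smul_mem (B.repr v i)⁻¹ hc
        rwa [smul_smul, inv_mul_cancel₀ hci, one_smul] at h3
      exact (Finset.eq_of_subset_of_card_le hsub
        (by rw [hTcard m hmn, hScard])).symm
    refine ⟨σ, ?_, ?_⟩
    · show ∀ j : Fin n, σ j ∈ SS ↔ (j : ℕ) < m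
      intro j
      constructor
      · intro hj
        have h1 : σ j ∈ T m := by rw [hTmSS]; exact hj
        rw [hTall m] at h1
        obtain ⟨j', hj', hjj⟩ := (hTσmem σ m _).mp h1
        obtain rfl := σ.injective hjj
        exact hj'
      · intro hj
        have h1 : σ j ∈ Tσ σ m := (hTσmem σ m _).mpr ⟨j, hj, rfl⟩
        rw [← hTall m, hTmSS] at h1
        exact h1
    · funext k
      rw [hFdef]
      dsimp only
      rw [← hTall k, ← hVspan k]
  have hFlagsEq : {V : ℕ → Submodule ℂ (Fin n → ℂ) |
      Monotone V ∧ (∀ k, k ≤ n → Module.finrank ℂ (V k) = k) ∧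
      (∀ k, ∀ u ∈ V k, g.mulVec u ∈ V k) ∧ v ∈ V m} = F '' A :=
    Set.Subset.antisymm hback hFA
  -- injectivity of F
  have hFinj : Function.Injective F := by
    intro σ τ hστ
    have hT : ∀ k, Tσ σ k = Tσ τ k := by
      intro k
      have h1 : ∀ (ρ : Fin n ≃ ↥E) (i : ↥E), i ∈ Tσ ρ k ↔ B i ∈ F ρ k := by
        intro ρ i
        rw [hFdef]
        dsimp only
        rw [B.self_mem_span_image]
        exact (Finset.mem_coe).symm
      ext i
      rw [h1 σ, h1 τ, hστ]
    apply Equiv.ext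
    intro j
    have h1 : σ j ∈ Tσ τ ((j : ℕ) + 1) := by
      rw [← hT]
      exact (hTσmem σ _ _).mpr ⟨j, by omega, rfl⟩
    have h2 : σ j ∉ Tσ τ (j : ℕ) := by
      rw [← hT]
      intro hC
      obtain ⟨j', hj', hjj⟩ := (hTσmem σ _ _).mp hC
      obtain rfl := σ.injective hjj
      omega
    obtain ⟨j', hj', hjj⟩ := (hTσmem τ _ _).mp h1
    have hj'j : ¬ ((j' : ℕ) < (j : ℕ)) := fun hC => h2 ((hTσmem τ _ _).mpr ⟨j', hC, hjj⟩)
    have hjeq : j' = j := Fin.ext (by omega)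
    rw [← hjj, hjeq]
  -- cardinality of A
  have hAcard : Nat.card ↥A = m.factorial * (n - m).factorial := by
    have c1 : Fintype.card {j : Fin n // (j : ℕ) < m} = m := card_fin_lt n m hmn
    have c2 : Fintype.card {i : ↥E // i ∈ SS} = m := by
      rw [Fintype.card_coe, hScard]
    have c3 : Fintype.card {j : Fin n // ¬ (j : ℕ) < m} = n - m := by
      rw [Fintype.card_subtype_compl, c1, Fintype.card_fin]
    have c4 : Fintype.card {i : ↥E // ¬ i ∈ SS} = n - m := by
      rw [Fintype.card_subtype_compl, c2, Fintype.card_coe, hg]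
    have e0 : ↥A ≃ {σ : Fin n ≃ ↥E // ∀ j : Fin n, σ j ∈ SS ↔ (j : ℕ) < m} :=
      Equiv.subtypeEquivRight (fun σ => Iff.rfl)
    have e1 := subtypePairEquiv (fun j : Fin n => (j : ℕ) < m) (fun i : ↥E => i ∈ SS)
    rw [Nat.card_eq_fintype_card, Fintype.card_congr (e0.trans e1), Fintype.card_prod]
    congr 1
    · rw [Fintype.card_equiv (Fintype.equivOfCardEq (by rw [c1, c2])), c1]
    · rw [Fintype.card_equiv (Fintype.equivOfCardEq (by rw [c3, c4])), c3]
  constructor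
  · rw [hFlagsEq]
    exact (A.toFinite).image F
  · rw [hFlagsEq, Set.ncard_image_of_injective _ hFinj, ← Nat.card_coe_set_eq, hAcard]
end
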